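/- Let Δ, v₀, δ₀, φ₀ ∈ ℝ and set D = δ₀ − φ₀. Define vₖ = ((D − 1)(D + 1) v₀) / ((D − 2k + 1)(D − 2k − 1)) and assume D − 2k + 1 ≠ 0 and D − 2k − 1 ≠ 0 for all 0 ≤ k ≤ n − 1, and D − 2n + 1 ≠ 0. Then for every n ≥ 1: Σ_{k=0}^{n−1} (Δ + vₖ²)(D − 2k) = n (D − n + 1)(Δ (D − 2n + 1)² + v₀² (D − 1)²) / (D − 2n + 1)². -/

import Mathlib

lemma stmt_6_aux (Δ v₀ D : ℝ) (v : ℕ → ℝ)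
    (hv : ∀ k : ℕ, v k = (D - 1) * (D + 1) * v₀ /
      ((D - 2 * k + 1) * (D - 2 * k - 1))) :
    ∀ n : ℕ, 1 ≤ n → (∀ k : ℕ, k ≤ n → D - 2 * k + 1 ≠ 0) →
    ∑ k ∈ Finset.range n, (Δ + v k ^ 2) * (D - 2 * k) =
      (n : ℝ) * (D - n + 1) *
        (Δ * (D - 2 * n + 1) ^ 2 + v₀ ^ 2 * (D - 1) ^ 2) /
        (D - 2 * n + 1) ^ 2 := by
  intro n hn'
  induction n, hn' using Nat.le_induction with
  | base =>
    intro h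
    have h0 : D + 1 ≠ 0 := by
      have := h 0 (by norm_num); push_cast at this
      intro hc; exact this (by linarith)
    have h1 : D - 1 ≠ 0 := by
      have := h 1 le_rfl; push_cast at this
      intro hc; exact this (by linarith)
    have hv0 : v 0 = v₀ := by
      rw [hv]; push_cast; norm_num
      field_simp
    simp only [Finset.sum_range_one, hv0]
    push_cast
    rw [show D - 2 * (1:ℝ) + 1 = D - 1 by ring]
    field_simp
    ring
  | succ n hn ih =>
    intro h
    have hprev : ∀ k : ℕ, k ≤ n → D - 2 * k + 1 ≠ 0 := fun k hk => h k (hk.trans (Nat.le_succ n))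
    have h1 : D - 2 * n + 1 ≠ 0 := h n (Nat.le_succ n)
    have h2 : D - 2 * (n + 1 : ℕ) + 1 ≠ 0 := h (n + 1) le_rfl
    have h2' : D - 2 * (n : ℝ) - 1 ≠ 0 := by push_cast at h2 ⊢; intro hc; apply h2; linarith
    rw [Finset.sum_range_succ, ih hprev, hv n]
    push_cast at h2 ⊢
    have h2'' : D - 2 * ((n : ℝ) + 1) + 1 ≠ 0 := h2
    rw [show D - 2 * ((n : ℝ) + 1) + 1 = D - 2 * n - 1 by ring]
    have hab := mul_ne_zero h1 h2'
    rw [div_pow, add_div' _ _ _ (pow_ne_zero 2 hab), div_mul_eq_mul_div, div_add_div _ _ (pow_ne_zero 2 h1) (pow_ne_zero 2 hab), div_eq_div_iff (mul_ne_zero (pow_ne_zero 2 h1) (pow_ne_zero 2 hab)) (pow_ne_zero 2 h2')]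
    ring

theorem stmt_6 (Δ v₀ δ₀ φ₀ : ℝ) (v : ℕ → ℝ)
    (hv : ∀ k : ℕ, v k = ((δ₀ - φ₀) - 1) * ((δ₀ - φ₀) + 1) * v₀ /
      (((δ₀ - φ₀) - 2 * k + 1) * ((δ₀ - φ₀) - 2 * k - 1)))
    (n : ℕ) (hn : 1 ≤ n)
    (hne : ∀ k : ℕ, k ≤ n - 1 →
      (δ₀ - φ₀) - 2 * k + 1 ≠ 0 ∧ (δ₀ - φ₀) - 2 * k - 1 ≠ 0)
    (hnen : (δ₀ - φ₀) - 2 * n + 1 ≠ 0) :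
    ∑ k ∈ Finset.range n, (Δ + v k ^ 2) * ((δ₀ - φ₀) - 2 * k) =
      (n : ℝ) * ((δ₀ - φ₀) - n + 1) *
        (Δ * ((δ₀ - φ₀) - 2 * n + 1) ^ 2 + v₀ ^ 2 * ((δ₀ - φ₀) - 1) ^ 2) /
        ((δ₀ - φ₀) - 2 * n + 1) ^ 2 := by
  apply stmt_6_aux Δ v₀ (δ₀ - φ₀) v hv n hn
  intro k hk
  rcases Nat.lt_or_ge k n with hlt | hge
  · exact (hne k (Nat.le_sub_one_of_lt hlt)).1
  · have : k = n := le_antisymm hk hge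
    subst this; exact hnen
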